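/- A subspace V₊ ⊆ E = V ⊕ W ⊕ V* is a generalized metric if and only if there exist a positive-definite symmetric bilinear form g on V, an antisymmetric bilinear form B on V, and a linear map ϑ : V → W such that V₊ = { (X, −ϑ(X), g(X,·) + B(X,·) − (1/2)·⟨ϑ(X), ϑ(·)⟩_W) : X ∈ V }. Moreover, the triple (g, B, ϑ) is uniquely determined by V₊. -/
import Mathlib


/-- A subspace on which the bilinear form is positive definite. -/
def IsPosDefOn {E : Type*} [AddCommGroup E] [Module ℝ E]
    (B : E →ₗ[ℝ] E →ₗ[ℝ] ℝ) (V : Submodule ℝ E) : Prop :=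
  ∀ x ∈ V, x ≠ 0 → 0 < B x x

/-- A generalized metric: a subspace on which the form is positive definite and which is
maximal with this property. -/
def IsGenMetric {E : Type*} [AddCommGroup E] [Module ℝ E]
    (B : E →ₗ[ℝ] E →ₗ[ℝ] ℝ) (V : Submodule ℝ E) : Prop :=
  IsPosDefOn B V ∧ ∀ W : Submodule ℝ E, V ≤ W → IsPosDefOn B W → W = V

/-- The symmetric pairing `⟨(X,Φ,ξ),(Y,Ψ,η)⟩ = η(X) + ξ(Y) + ⟨Φ,Ψ⟩_W` on
`V ⊕ W ⊕ V*`, for a given symmetric bilinear form `cW` on `W`. -/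
def hetPairing {V W : Type*} [AddCommGroup V] [Module ℝ V] [AddCommGroup W] [Module ℝ W]
    (cW : W →ₗ[ℝ] W →ₗ[ℝ] ℝ) :
    (V × W × Module.Dual ℝ V) →ₗ[ℝ] (V × W × Module.Dual ℝ V) →ₗ[ℝ] ℝ :=
  LinearMap.mk₂ ℝ (fun p q => q.2.2 p.1 + p.2.2 q.1 + cW p.2.1 q.2.1)
    (by intro p p' q; simp; ring)
    (by intro c p q; simp; ring)
    (by intro p q q'; simp; ring)
    (by intro c p q; simp; ring)

section Helpers

variable {V W : Type*} [AddCommGroup V] [Module ℝ V] [FiniteDimensional ℝ V]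
  [AddCommGroup W] [Module ℝ W] [FiniteDimensional ℝ W]
  (cW : W →ₗ[ℝ] W →ₗ[ℝ] ℝ)

lemma hetPairing_apply (p q : V × W × Module.Dual ℝ V) :
    hetPairing cW p q = q.2.2 p.1 + p.2.2 q.1 + cW p.2.1 q.2.1 := rfl

/-- self-pairing of an element with vanishing first component. -/
lemma hetPairing_self_fst_zero (p : V × W × Module.Dual ℝ V) (h : p.1 = 0) :
    hetPairing cW p p = cW p.2.1 p.2.1 := by
  rw [hetPairing_apply, h]; simp

/-- the graph map associated to `(g, Bf, ϑ)`. -/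
noncomputable def graphMap (g Bf : V →ₗ[ℝ] V →ₗ[ℝ] ℝ) (ϑ : V →ₗ[ℝ] W) :
    V →ₗ[ℝ] V × W × Module.Dual ℝ V :=
  LinearMap.prod LinearMap.id
    (LinearMap.prod (-ϑ)
      (g + Bf - (2:ℝ)⁻¹ • (((LinearMap.llcomp ℝ V W ℝ).flip ϑ) ∘ₗ (cW ∘ₗ ϑ))))

lemma graphMap_apply (g Bf : V →ₗ[ℝ] V →ₗ[ℝ] ℝ) (ϑ : V →ₗ[ℝ] W) (X : V) :
    graphMap cW g Bf ϑ X = (X, - ϑ X, g X + Bf X - (2:ℝ)⁻¹ • ((cW (ϑ X)) ∘ₗ ϑ)) := rfl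

set_option linter.unusedSectionVars false

lemma hetPairing_self_nonpos (hcWneg : ∀ x : W, x ≠ 0 → cW x x < 0)
    (p : V × W × Module.Dual ℝ V) (h : p.1 = 0) :
    hetPairing cW p p ≤ 0 := by
  rw [hetPairing_self_fst_zero cW p h]
  rcases eq_or_ne p.2.1 0 with h2 | h2
  · simp [h2]
  · exact (hcWneg _ h2).le

lemma graph_isGenMetric (hcWneg : ∀ x : W, x ≠ 0 → cW x x < 0)
    (g Bf : V →ₗ[ℝ] V →ₗ[ℝ] ℝ) (ϑ : V →ₗ[ℝ] W)
    (hgpos : ∀ X : V, X ≠ 0 → 0 < g X X)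
    (hB : ∀ X Y : V, Bf X Y = - Bf Y X)
    (Vp : Submodule ℝ (V × W × Module.Dual ℝ V))
    (hVp : (Vp : Set (V × W × Module.Dual ℝ V)) =
      { p | ∃ X : V, p = (X, - ϑ X, g X + Bf X - (2 : ℝ)⁻¹ • ((cW (ϑ X)) ∘ₗ ϑ)) }) :
    IsGenMetric (hetPairing cW) Vp := by
  have hmem : ∀ p : V × W × Module.Dual ℝ V, p ∈ Vp ↔ ∃ X : V, p = graphMap cW g Bf ϑ X := by
    intro p
    rw [← SetLike.mem_coe, hVp]
    simp only [Set.mem_setOf_eq, graphMap_apply]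
  constructor
  · -- positive definiteness
    intro p hp hp0
    obtain ⟨X, rfl⟩ := (hmem p).mp hp
    have hX : X ≠ 0 := by rintro rfl; exact hp0 (map_zero _)
    have hBXX : Bf X X = 0 := by have := hB X X; linarith
    have : hetPairing cW (graphMap cW g Bf ϑ X) (graphMap cW g Bf ϑ X) = 2 * g X X := by
      rw [graphMap_apply, hetPairing_apply]
      simp only [LinearMap.sub_apply, LinearMap.add_apply, LinearMap.smul_apply,
        LinearMap.comp_apply, map_neg, LinearMap.neg_apply, neg_neg, smul_eq_mul]
      rw [hBXX]; ring
    rw [this]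
    have := hgpos X hX
    linarith
  · -- maximality
    intro W' hle hpd
    refine le_antisymm ?_ hle
    intro r hr
    set m : V × W × Module.Dual ℝ V := graphMap cW g Bf ϑ r.1 with hm
    have hmVp : m ∈ Vp := (hmem m).mpr ⟨r.1, rfl⟩
    have hrm : r - m ∈ W' := Submodule.sub_mem _ hr (hle hmVp)
    have hfst : (r - m).1 = 0 := by
      simp [hm, graphMap_apply]
    have hzero : r - m = 0 := by
      by_contra hne
      exact absurd (hpd _ hrm hne) (not_lt.2 (hetPairing_self_nonpos cW hcWneg _ hfst))
    have : r = m := by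
      have := sub_eq_zero.mp hzero; exact this
    rw [this]; exact hmVp

lemma exists_graph_of_genMetric (hcWsymm : ∀ x y : W, cW x y = cW y x)
    (hcWneg : ∀ x : W, x ≠ 0 → cW x x < 0)
    (Vp : Submodule ℝ (V × W × Module.Dual ℝ V))
    (h : IsGenMetric (hetPairing cW) Vp) :
    ∃ (g Bf : V →ₗ[ℝ] V →ₗ[ℝ] ℝ) (ϑ : V →ₗ[ℝ] W),
      (∀ X Y : V, g X Y = g Y X) ∧ (∀ X : V, X ≠ 0 → 0 < g X X) ∧
      (∀ X Y : V, Bf X Y = - Bf Y X) ∧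
      (Vp : Set (V × W × Module.Dual ℝ V)) =
        { p | ∃ X : V, p = (X, - ϑ X, g X + Bf X - (2 : ℝ)⁻¹ • ((cW (ϑ X)) ∘ₗ ϑ)) } := by
  have key : ∀ p ∈ Vp, p.1 = 0 → p = (0 : V × W × Module.Dual ℝ V) := by
    intro p hp h1
    by_contra hne
    exact absurd (h.1 p hp hne) (not_lt.2 (hetPairing_self_nonpos cW hcWneg p h1))
  set π : Vp →ₗ[ℝ] V := (LinearMap.fst ℝ V (W × Module.Dual ℝ V)) ∘ₗ Vp.subtype with hπ
  have hinj : Function.Injective π := by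
    intro a b hab
    have hab' : ((a : V × W × Module.Dual ℝ V)).1 = ((b : V × W × Module.Dual ℝ V)).1 := hab
    have hd : (((a - b : Vp) : V × W × Module.Dual ℝ V)).1 = 0 := by
      push_cast
      simp [hab']
    have hz : ((a - b : Vp) : V × W × Module.Dual ℝ V) = 0 := key _ (a - b).2 hd
    have : a - b = 0 := Subtype.ext hz
    exact sub_eq_zero.mp this
  have hsymmP : ∀ a b : V × W × Module.Dual ℝ V,
      hetPairing cW a b = hetPairing cW b a := by
    intro a b; rw [hetPairing_apply, hetPairing_apply, hcWsymm]; ring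
  have hnonneg : ∀ p ∈ Vp, 0 ≤ hetPairing cW p p := by
    intro p hp
    rcases eq_or_ne p 0 with rfl | hne
    · simp
    · exact (h.1 p hp hne).le
  have hsurj : ∀ Y : V, Y ∈ LinearMap.range π := by
    intro Y
    by_contra hY
    set U : Submodule ℝ V := LinearMap.range π with hU
    set e := LinearEquiv.ofInjective π hinj with he
    set s : U →ₗ[ℝ] V × W × Module.Dual ℝ V := Vp.subtype ∘ₗ (e.symm : U →ₗ[ℝ] Vp) with hs
    have hs_mem : ∀ u : U, s u ∈ Vp := fun u => (e.symm u).2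
    have hs_fst : ∀ u : U, (s u).1 = (u : V) := by
      intro u
      have h1 : e (e.symm u) = u := e.apply_symm_apply u
      have h2 := congrArg Subtype.val h1
      rw [he, LinearEquiv.ofInjective_apply] at h2
      exact h2
    have hs_eq : ∀ p ∈ Vp, ∀ u : U, (u : V) = p.1 → s u = p := by
      intro p hp u hu
      have hdiff : s u - p ∈ Vp := Vp.sub_mem (hs_mem u) hp
      have hfst : (s u - p).1 = 0 := by
        simp [hs_fst u, hu]
      have := key _ hdiff hfst
      exact sub_eq_zero.mp this
    set φ : U →ₗ[ℝ] ℝ :=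
      -((LinearMap.applyₗ Y) ∘ₗ (LinearMap.snd ℝ W (Module.Dual ℝ V)) ∘ₗ
        (LinearMap.snd ℝ V (W × Module.Dual ℝ V)) ∘ₗ s) with hφ
    have hφapp : ∀ u : U, φ u = - (s u).2.2 Y := fun u => rfl
    obtain ⟨U', hUc⟩ := Submodule.exists_isCompl U
    set η₀ : Module.Dual ℝ V := LinearMap.ofIsCompl hUc φ 0 with hη₀
    have hη₀U : ∀ u : U, η₀ (u : V) = φ u := fun u => LinearMap.ofIsCompl_left_apply hUc u
    obtain ⟨χ, hχY, hχU⟩ := U.exists_dual_map_eq_bot_of_notMem hY inferInstance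
    have hχU' : ∀ u ∈ U, χ u = 0 := by
      intro u hu
      have : χ u ∈ U.map χ := ⟨u, hu, rfl⟩
      rw [hχU] at this; simpa using this
    set η : Module.Dual ℝ V := η₀ + ((1 - η₀ Y) / χ Y) • χ with hη
    have hηY : η Y = 1 := by
      rw [hη]
      simp only [LinearMap.add_apply, LinearMap.smul_apply, smul_eq_mul]
      rw [div_mul_cancel₀ _ hχY]
      ring_nf
    have hηU : ∀ u : U, η (u : V) = φ u := by
      intro u
      rw [hη]
      simp only [LinearMap.add_apply, LinearMap.smul_apply, smul_eq_mul]
      rw [hχU' u u.2, hη₀U u]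
      ring
    set q : V × W × Module.Dual ℝ V := (Y, 0, η) with hq
    have hpq : ∀ p ∈ Vp, hetPairing cW p q = 0 := by
      intro p hp
      have hu : p.1 ∈ U := ⟨⟨p, hp⟩, rfl⟩
      have h1 : η p.1 = - p.2.2 Y := by
        have h2 := hηU ⟨p.1, hu⟩
        rw [hφapp, hs_eq p hp ⟨p.1, hu⟩ rfl] at h2
        exact h2
      rw [hetPairing_apply]
      simp [hq, h1]
    have hqq : hetPairing cW q q = 2 := by
      rw [hetPairing_apply]
      simp [hq, hηY]
      norm_num
    set W2 : Submodule ℝ (V × W × Module.Dual ℝ V) := Vp ⊔ Submodule.span ℝ {q} with hW2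
    have hpd : IsPosDefOn (hetPairing cW) W2 := by
      intro r hr hr0
      obtain ⟨p, hp, m, hm, rfl⟩ := Submodule.mem_sup.mp hr
      obtain ⟨t, rfl⟩ := Submodule.mem_span_singleton.mp hm
      have hexp : hetPairing cW (p + t • q) (p + t • q)
          = hetPairing cW p p + 2 * t ^ 2 := by
        simp only [map_add, map_smul, LinearMap.add_apply, LinearMap.smul_apply, smul_eq_mul]
        rw [hpq p hp, hqq, hsymmP q p, hpq p hp]; ring
      rw [hexp]
      rcases eq_or_ne t 0 with rfl | ht
      · have hp0 : p ≠ 0 := by simpa using hr0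
        have := h.1 p hp hp0
        linarith
      · have ht2 : 0 < t ^ 2 := by positivity
        have := hnonneg p hp
        linarith
    have hW2eq : W2 = Vp := h.2 W2 le_sup_left hpd
    have hqVp : q ∈ Vp := by
      rw [← hW2eq]
      exact (le_sup_right : Submodule.span ℝ {q} ≤ W2) (Submodule.mem_span_singleton_self q)
    exact hY ⟨⟨q, hqVp⟩, rfl⟩
  have hbij : Function.Bijective π := ⟨hinj, fun Y => LinearMap.mem_range.mp (hsurj Y)⟩
  set eb := LinearEquiv.ofBijective π hbij with heb
  set F : V →ₗ[ℝ] V × W × Module.Dual ℝ V := Vp.subtype ∘ₗ (eb.symm : V →ₗ[ℝ] Vp) with hF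
  have hF_mem : ∀ X : V, F X ∈ Vp := fun X => (eb.symm X).2
  have hF_fst : ∀ X : V, (F X).1 = X := by
    intro X
    have h1 : eb (eb.symm X) = X := eb.apply_symm_apply X
    rw [heb, LinearEquiv.ofBijective_apply] at h1
    exact h1
  have hF_eq : ∀ p ∈ Vp, F p.1 = p := by
    intro p hp
    have hdiff : F p.1 - p ∈ Vp := Vp.sub_mem (hF_mem p.1) hp
    have hfst : (F p.1 - p).1 = 0 := by simp [hF_fst]
    exact sub_eq_zero.mp (key _ hdiff hfst)
  set ϑ : V →ₗ[ℝ] W := -((LinearMap.fst ℝ W (Module.Dual ℝ V)) ∘ₗ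
      (LinearMap.snd ℝ V (W × Module.Dual ℝ V)) ∘ₗ F) with hϑ
  have hϑapp : ∀ X : V, ϑ X = -(F X).2.1 := fun X => rfl
  set σ : V →ₗ[ℝ] Module.Dual ℝ V := (LinearMap.snd ℝ W (Module.Dual ℝ V)) ∘ₗ
      (LinearMap.snd ℝ V (W × Module.Dual ℝ V)) ∘ₗ F with hσ
  have hσapp : ∀ X : V, σ X = (F X).2.2 := fun X => rfl
  set cϑ : V →ₗ[ℝ] Module.Dual ℝ V := ((LinearMap.llcomp ℝ V W ℝ).flip ϑ) ∘ₗ (cW ∘ₗ ϑ) with hcϑ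
  have hcϑapp : ∀ X : V, cϑ X = (cW (ϑ X)) ∘ₗ ϑ := fun X => rfl
  set τ : V →ₗ[ℝ] Module.Dual ℝ V := σ + (2:ℝ)⁻¹ • cϑ with hτ
  set g : V →ₗ[ℝ] V →ₗ[ℝ] ℝ := (2:ℝ)⁻¹ • (τ + τ.flip) with hg
  set Bf : V →ₗ[ℝ] V →ₗ[ℝ] ℝ := (2:ℝ)⁻¹ • (τ - τ.flip) with hBf
  have hτapp : ∀ X Y2 : V, τ X Y2 = σ X Y2 + (2:ℝ)⁻¹ * (cW (ϑ X) (ϑ Y2)) := by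
    intro X Y2
    rw [hτ]
    simp only [LinearMap.add_apply, LinearMap.smul_apply, smul_eq_mul, hcϑapp,
      LinearMap.comp_apply]
  have hgapp : ∀ X Y2 : V, g X Y2 = (2:ℝ)⁻¹ * (τ X Y2 + τ Y2 X) := by
    intro X Y2
    rw [hg]
    simp only [LinearMap.smul_apply, LinearMap.add_apply, LinearMap.flip_apply, smul_eq_mul]
  have hBapp : ∀ X Y2 : V, Bf X Y2 = (2:ℝ)⁻¹ * (τ X Y2 - τ Y2 X) := by
    intro X Y2
    rw [hBf]
    simp only [LinearMap.smul_apply, LinearMap.sub_apply, LinearMap.flip_apply, smul_eq_mul]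
  have hgpos : ∀ X : V, X ≠ 0 → 0 < g X X := by
    intro X hX
    have hFX0 : F X ≠ 0 := by
      intro h0
      apply hX
      rw [← hF_fst X, h0]; rfl
    have hp := h.1 (F X) (hF_mem X) hFX0
    have hcomp : hetPairing cW (F X) (F X) = 2 * g X X := by
      rw [hetPairing_apply]
      have h21 : (F X).2.1 = - ϑ X := by rw [hϑapp, neg_neg]
      have h22 : (F X).2.2 = σ X := (hσapp X).symm
      rw [h21, h22, hgapp, hτapp, map_neg, hF_fst]
      simp only [LinearMap.neg_apply, map_neg, neg_neg]
      ring
    rw [hcomp] at hp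
    linarith
  have hthird : ∀ X : V,
      g X + Bf X - (2:ℝ)⁻¹ • ((cW (ϑ X)) ∘ₗ ϑ) = σ X := by
    intro X
    ext Y2
    simp only [LinearMap.sub_apply, LinearMap.add_apply, LinearMap.smul_apply, smul_eq_mul,
      LinearMap.comp_apply, hgapp, hBapp, hτapp]
    ring
  have hFexpr : ∀ X : V,
      F X = (X, - ϑ X, g X + Bf X - (2:ℝ)⁻¹ • ((cW (ϑ X)) ∘ₗ ϑ)) := by
    intro X
    rw [hthird X, hσapp, hϑapp, neg_neg]
    exact Prod.ext (hF_fst X) rfl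
  refine ⟨g, Bf, ϑ, ?_, hgpos, ?_, ?_⟩
  · intro X Y2
    rw [hgapp, hgapp]; ring
  · intro X Y2
    rw [hBapp, hBapp]; ring
  · ext p
    simp only [SetLike.mem_coe, Set.mem_setOf_eq]
    constructor
    · intro hp
      refine ⟨p.1, ?_⟩
      rw [← hFexpr p.1]
      exact (hF_eq p hp).symm
    · rintro ⟨X, rfl⟩
      rw [← hFexpr X]
      exact hF_mem X

lemma graph_unique
    (g g' Bf Bf' : V →ₗ[ℝ] V →ₗ[ℝ] ℝ) (ϑ ϑ' : V →ₗ[ℝ] W)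
    (hgs : ∀ X Y : V, g X Y = g Y X) (hgs' : ∀ X Y : V, g' X Y = g' Y X)
    (hB : ∀ X Y : V, Bf X Y = -Bf Y X) (hB' : ∀ X Y : V, Bf' X Y = -Bf' Y X)
    (hset : { p : V × W × Module.Dual ℝ V |
        ∃ X : V, p = (X, - ϑ X, g X + Bf X - (2 : ℝ)⁻¹ • ((cW (ϑ X)) ∘ₗ ϑ)) } =
      { p : V × W × Module.Dual ℝ V |
        ∃ X : V, p = (X, - ϑ' X, g' X + Bf' X - (2 : ℝ)⁻¹ • ((cW (ϑ' X)) ∘ₗ ϑ')) }) :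
    g = g' ∧ Bf = Bf' ∧ ϑ = ϑ' := by
  have key : ∀ X : V, ϑ X = ϑ' X ∧
      g X + Bf X - (2:ℝ)⁻¹ • ((cW (ϑ X)) ∘ₗ ϑ)
        = g' X + Bf' X - (2:ℝ)⁻¹ • ((cW (ϑ' X)) ∘ₗ ϑ') := by
    intro X
    have hmem : (X, - ϑ X, g X + Bf X - (2:ℝ)⁻¹ • ((cW (ϑ X)) ∘ₗ ϑ)) ∈
        { p : V × W × Module.Dual ℝ V |
          ∃ X' : V, p = (X', - ϑ' X', g' X' + Bf' X' - (2 : ℝ)⁻¹ • ((cW (ϑ' X')) ∘ₗ ϑ')) } := by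
      rw [← hset]
      exact ⟨X, rfl⟩
    obtain ⟨X', hX'⟩ := hmem
    rw [Prod.ext_iff] at hX'
    obtain ⟨h1, hX'⟩ := hX'
    rw [Prod.ext_iff] at hX'
    obtain ⟨h2, h3⟩ := hX'
    dsimp only at h1 h2 h3
    subst h1
    exact ⟨neg_inj.mp h2, h3⟩
  have ϑeq : ϑ = ϑ' := LinearMap.ext fun X => (key X).1
  subst ϑeq
  have hgB : ∀ X Y : V, g X Y + Bf X Y = g' X Y + Bf' X Y := by
    intro X Y
    have h3 := (key X).2
    have h4 : g X + Bf X = g' X + Bf' X := sub_left_inj.mp h3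
    have h5 := LinearMap.congr_fun h4 Y
    simpa using h5
  refine ⟨?_, ?_, rfl⟩
  · ext X Y
    have e1 := hgB X Y
    have e2 := hgB Y X
    have s1 := hgs X Y
    have s2 := hgs' X Y
    have a1 := hB X Y
    have a2 := hB' X Y
    linarith
  · ext X Y
    have e1 := hgB X Y
    have e2 := hgB Y X
    have s1 := hgs X Y
    have s2 := hgs' X Y
    have a1 := hB X Y
    have a2 := hB' X Y
    linarith

end Helpers

/-- A subspace `V₊ ⊆ V ⊕ W ⊕ V*` is a generalized metric iff it is the
graph `{(X, −ϑ(X), g(X,·) + B(X,·) − (1/2)⟨ϑ(X),ϑ(·)⟩_W)}` for a positive-definite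
symmetric `g`, an antisymmetric `B` and a linear map `ϑ : V → W`; moreover the triple
`(g,B,ϑ)` is uniquely determined by `V₊`. -/
theorem genMetric_on_heterotic_iff
    {V W : Type*} [AddCommGroup V] [Module ℝ V] [FiniteDimensional ℝ V]
    [AddCommGroup W] [Module ℝ W] [FiniteDimensional ℝ W]
    (cW : W →ₗ[ℝ] W →ₗ[ℝ] ℝ)
    (hcWsymm : ∀ x y : W, cW x y = cW y x)
    (hcWneg : ∀ x : W, x ≠ 0 → cW x x < 0)
    (Vp : Submodule ℝ (V × W × Module.Dual ℝ V)) :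
    (IsGenMetric (hetPairing cW) Vp ↔
      ∃ (g Bf : V →ₗ[ℝ] V →ₗ[ℝ] ℝ) (ϑ : V →ₗ[ℝ] W),
        (∀ X Y : V, g X Y = g Y X) ∧ (∀ X : V, X ≠ 0 → 0 < g X X) ∧
        (∀ X Y : V, Bf X Y = - Bf Y X) ∧
        (Vp : Set (V × W × Module.Dual ℝ V)) =
          { p | ∃ X : V, p = (X, - ϑ X, g X + Bf X - (2 : ℝ)⁻¹ • ((cW (ϑ X)) ∘ₗ ϑ)) }) ∧
    (IsGenMetric (hetPairing cW) Vp →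
      ∃! gBϑ : (V →ₗ[ℝ] V →ₗ[ℝ] ℝ) × (V →ₗ[ℝ] V →ₗ[ℝ] ℝ) × (V →ₗ[ℝ] W),
        (∀ X Y : V, gBϑ.1 X Y = gBϑ.1 Y X) ∧ (∀ X : V, X ≠ 0 → 0 < gBϑ.1 X X) ∧
        (∀ X Y : V, gBϑ.2.1 X Y = - gBϑ.2.1 Y X) ∧
        (Vp : Set (V × W × Module.Dual ℝ V)) =
          { p | ∃ X : V, p = (X, - gBϑ.2.2 X,
              gBϑ.1 X + gBϑ.2.1 X - (2 : ℝ)⁻¹ • ((cW (gBϑ.2.2 X)) ∘ₗ gBϑ.2.2)) }) := by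

  constructor
  · constructor
    · exact exists_graph_of_genMetric cW hcWsymm hcWneg Vp
    · rintro ⟨g, Bf, ϑ, hgs, hgpos, hB, hVp⟩
      exact graph_isGenMetric cW hcWneg g Bf ϑ hgpos hB Vp hVp
  · intro hgm
    obtain ⟨g, Bf, ϑ, hgs, hgpos, hB, hVp⟩ := exists_graph_of_genMetric cW hcWsymm hcWneg Vp hgm
    refine ⟨(g, Bf, ϑ), ⟨hgs, hgpos, hB, hVp⟩, ?_⟩
    rintro ⟨g', Bf', ϑ'⟩ ⟨hgs', hgpos', hB', hVp'⟩
    obtain ⟨e1, e2, e3⟩ :=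
      graph_unique cW g' g Bf' Bf ϑ' ϑ hgs' hgs hB' hB (hVp'.symm.trans hVp)
    simp only [Prod.mk.injEq]
    exact ⟨e1, e2, e3⟩
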